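/- The set ℓ^∞ \ c₀ is maximal dense-lineable: (ℓ^∞ \ c₀) ∪ {0} contains a dense linear subspace of ℓ^∞ whose dimension equals the dimension of ℓ^∞ (namely the cardinality of the continuum). -/

import Mathlib

set_option maxHeartbeats 1000000
set_option synthInstance.maxHeartbeats 400000

open Filter Topology

namespace LinftyC0

open Set Cardinal Submodule Function

noncomputable section

abbrev X : Type := lp (fun _ : ℕ => ℝ) ⊤

/-- The subspace of null sequences inside `ℓ^∞`. -/
def C0 : Submodule ℝ X where
  carrier := {f | Tendsto (fun n => f n) atTop (𝓝 (0 : ℝ))}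
  zero_mem' := by
    simpa [lp.coeFn_zero] using (tendsto_const_nhds :
      Tendsto (fun _ : ℕ => (0 : ℝ)) atTop (𝓝 0))
  add_mem' := by
    intro a b ha hb
    have h := (ha.add hb)
    simp only [add_zero] at h
    have : (fun n => (a + b) n) = fun n => a n + b n := by
      funext n; rw [lp.coeFn_add]; rfl
    simpa [this] using h
  smul_mem' := by
    intro c f hf
    have h := hf.const_mul c
    simp only [mul_zero] at h
    have : (fun n => (c • f) n) = fun n => c * f n := by
      funext n; rw [lp.coeFn_smul]; rfl
    simpa [this] using h

lemma mem_C0 {f : X} : f ∈ C0 ↔ Tendsto (fun n => f n) atTop (𝓝 (0 : ℝ)) := Iff.rfl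

/-- Coercion as a linear map. -/
def coeL : X →ₗ[ℝ] (ℕ → ℝ) where
  toFun f := f
  map_add' f g := lp.coeFn_add f g
  map_smul' c f := lp.coeFn_smul c f

lemma coeL_apply (f : X) (n : ℕ) : coeL f n = f n := rfl

/-! ### An almost disjoint family and linear independence modulo `C0` -/

def pre (x : ℕ → Bool) (k : ℕ) : ℕ := Encodable.encode (List.ofFn fun i : Fin k => x i)

lemma pre_eq {x y : ℕ → Bool} {k j : ℕ} (h : pre x k = pre y j) :
    k = j ∧ ∀ i, i < k → x i = y i := by
  have h2 : (List.ofFn fun i : Fin k => x i) = List.ofFn fun i : Fin j => y i :=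
    Encodable.encode_injective h
  have hk : k = j := by simpa using congrArg List.length h2
  subst hk
  refine ⟨rfl, fun i hi => ?_⟩
  have := congrArg (fun l => l[i]?) h2
  simpa [List.getElem?_ofFn, hi] using this

lemma pre_injective (x : ℕ → Bool) : Function.Injective (pre x) :=
  fun k j h => (pre_eq h).1

def A (x : ℕ → Bool) : Set ℕ := Set.range (pre x)

def Fm (x : ℕ → Bool) : X :=
  ⟨(A x).indicator (fun _ => (1 : ℝ)), by
    apply memℓp_infty
    refine ⟨1, ?_⟩
    rintro r ⟨n, rfl⟩
    by_cases h : n ∈ A x <;> simp [Set.indicator_apply, h]⟩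

lemma Fm_apply (x : ℕ → Bool) (n : ℕ) :
    (Fm x : ℕ → ℝ) n = (A x).indicator (fun _ => (1 : ℝ)) n := rfl

lemma indep_mod : LinearIndependent ℝ (fun x : ℕ → Bool => C0.mkQ (Fm x)) := by
  classical
  rw [linearIndependent_iff']
  intro s g hsum x₀ hx₀
  -- the finite combination lies in C0
  have hmem : (∑ x ∈ s, g x • Fm x) ∈ C0 := by
    have : C0.mkQ (∑ x ∈ s, g x • Fm x) = 0 := by
      rw [map_sum]
      simpa [map_smul] using hsum
    rwa [Submodule.mkQ_apply, Submodule.Quotient.mk_eq_zero] at this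
  rw [mem_C0] at hmem
  -- the coordinatewise formula for the combination
  have hG : ∀ n : ℕ, ((∑ x ∈ s, g x • Fm x : X) : ℕ → ℝ) n
      = ∑ x ∈ s, g x * (A x).indicator (fun _ => (1 : ℝ)) n := by
    intro n
    have h1 : coeL (∑ x ∈ s, g x • Fm x) = ∑ x ∈ s, g x • coeL (Fm x) := by
      rw [map_sum]; simp [map_smul]
    have h2 := congrFun h1 n
    simpa [coeL_apply, Finset.sum_apply, Fm_apply] using h2
  by_contra hc
  -- find a bound beyond which prefixes of x₀ avoid all other A y
  have hdis : ∀ y ∈ s.erase x₀, ∃ m, x₀ m ≠ y m := by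
    intro y hy
    exact Function.ne_iff.1 (Finset.ne_of_mem_erase hy).symm
  choose m hm using hdis
  set K : ℕ := ((s.erase x₀).attach.sup fun y => m y.1 y.2) + 1 with hK
  have hKlt : ∀ (y) (hy : y ∈ s.erase x₀), m y hy < K := by
    intro y hy
    have h := Finset.le_sup (f := fun y : {y // y ∈ s.erase x₀} => m y.1 y.2)
      (Finset.mem_attach _ ⟨y, hy⟩)
    exact Nat.lt_succ_of_le h
  have hnotin : ∀ k, K ≤ k → ∀ y ∈ s.erase x₀, pre x₀ k ∉ A y := by
    rintro k hk y hy ⟨j, hj⟩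
    obtain ⟨hjk, hagree⟩ := pre_eq hj
    have h5 : m y hy < K := hKlt y hy
    exact hm y hy ((hagree (m y hy) (by omega)).symm)
  -- the value at pre x₀ k is g x₀ for k ≥ K
  have hval : ∀ k, K ≤ k → ((∑ x ∈ s, g x • Fm x : X) : ℕ → ℝ) (pre x₀ k) = g x₀ := by
    intro k hk
    rw [hG]
    rw [Finset.sum_eq_single x₀]
    · simp [Set.indicator_of_mem, A, Set.mem_range_self]
    · intro y hy hne
      have : pre x₀ k ∉ A y := hnotin k hk y (Finset.mem_erase.2 ⟨hne, hy⟩)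
      simp [Set.indicator_of_notMem this]
    · intro h; exact absurd hx₀ h
  -- tendsto to 0 contradicts infinitely many values g x₀ ≠ 0
  have habs : (0 : ℝ) < |g x₀| := abs_pos.2 hc
  obtain ⟨N, hN⟩ := (Metric.tendsto_atTop.1 hmem) |g x₀| habs
  have hfin : Set.Finite {k | pre x₀ k < N} := by
    have : Set.Finite (Set.Iio N) := Set.finite_Iio N
    exact Set.Finite.preimage (Set.injOn_of_injective (pre_injective x₀)) this
  obtain ⟨b, hb⟩ := hfin.bddAbove
  set k := max K (b + 1) with hkdef
  have hkK : K ≤ k := le_max_left _ _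
  have hkN : N ≤ pre x₀ k := by
    by_contra h
    have : k ∈ {k | pre x₀ k < N} := by simpa using Nat.lt_of_not_le h
    have := hb this
    omega
  have := hN (pre x₀ k) hkN
  rw [Real.dist_eq, sub_zero, hval k hkK] at this
  exact absurd this (lt_irrefl _)

lemma rankQ : Cardinal.continuum ≤ Module.rank ℝ (X ⧸ C0) := by
  have h := indep_mod.cardinal_le_rank
  have hmk : #(ℕ → Bool) = Cardinal.continuum := by
    rw [Cardinal.mk_arrow]
    simp [Cardinal.mk_bool, Cardinal.two_power_aleph0]
  rwa [hmk] at h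

lemma span_small_ne_top (T : Set (X ⧸ C0)) (hT : #T < Cardinal.continuum) :
    Submodule.span ℝ T ≠ ⊤ := by
  intro h
  have h1 : Module.rank ℝ (X ⧸ C0) ≤ #T := by
    have h2 := rank_span_le (R := ℝ) T
    rwa [h, rank_top] at h2
  exact absurd (rankQ.trans h1) (not_le.2 hT)

/-- Key step: perturb any point to get out of a proper subspace of the quotient. -/
lemma step (V : Submodule ℝ (X ⧸ C0)) (hV : V ≠ ⊤) (d : X) {ε : ℝ} (hε : 0 < ε) :
    ∃ x : X, ‖x - d‖ < ε ∧ C0.mkQ x ∉ V := by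
  obtain ⟨q, hq⟩ : ∃ q, q ∉ V := by
    by_contra h
    push_neg at h
    exact hV (eq_top_iff.2 fun q _ => h q)
  by_cases hd : C0.mkQ d ∈ V
  · obtain ⟨z, hz⟩ := Submodule.Quotient.mk_surjective C0 q
    set c : ℝ := ε / (2 * (‖z‖ + 1)) with hcdef
    have hzpos : (0 : ℝ) < ‖z‖ + 1 := by positivity
    have hc : 0 < c := div_pos hε (by positivity)
    refine ⟨d + c • z, ?_, ?_⟩
    · rw [add_sub_cancel_left, norm_smul, Real.norm_eq_abs, abs_of_pos hc]
      have h1 : c * ‖z‖ ≤ c * (‖z‖ + 1) := by nlinarith [norm_nonneg z]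
      have h2 : c * (‖z‖ + 1) = ε / 2 := by
        rw [hcdef]; field_simp
      linarith
    · intro hmemV
      rw [map_add, map_smul] at hmemV
      have h3 : c • C0.mkQ z ∈ V := by
        have := V.sub_mem hmemV hd
        simpa using this
      have h4 : C0.mkQ z ∈ V := by
        have := V.smul_mem c⁻¹ h3
        rwa [smul_smul, inv_mul_cancel₀ (ne_of_gt hc), one_smul] at this
      rw [Submodule.mkQ_apply, hz] at h4
      exact hq h4
  · exact ⟨d, by simpa using hε, hd⟩

/-- Linear independence from a well-ordered "not in span of predecessors" condition. -/
lemma li_of_wo {ι : Type} [LinearOrder ι] {M : Type} [AddCommGroup M] [Module ℝ M]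
    {v : ι → M} (h : ∀ i, v i ∉ Submodule.span ℝ (v '' Set.Iio i)) :
    LinearIndependent ℝ v := by
  classical
  rw [linearIndependent_iff']
  intro s
  induction s using Finset.induction_on_max with
  | empty => intro g _ i hi; exact absurd hi (Finset.notMem_empty i)
  | insert a t ha ih =>
    intro g hg i hi
    have hat : a ∉ t := fun hat => lt_irrefl a (ha a hat)
    rw [Finset.sum_insert hat] at hg
    have hga : g a = 0 := by
      by_contra hga
      apply h a
      have h1 : g a • v a = -∑ x ∈ t, g x • v x := eq_neg_of_add_eq_zero_left hg
      have h2 : v a = ∑ x ∈ t, (-(g a)⁻¹ * g x) • v x := by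
        have := congrArg (fun w => (g a)⁻¹ • w) h1
        simp only [smul_smul, inv_mul_cancel₀ hga, one_smul, smul_neg, Finset.smul_sum] at this
        rw [this]
        rw [← Finset.sum_neg_distrib]
        congr 1
        funext x
        rw [neg_mul, neg_smul]
      rw [h2]
      exact Submodule.sum_mem _ fun x hx =>
        Submodule.smul_mem _ _ (Submodule.subset_span ⟨x, ha x hx, rfl⟩)
    have hgt : ∑ x ∈ t, g x • v x = 0 := by
      rw [hga] at hg; simpa using hg
    rcases Finset.mem_insert.1 hi with rfl | hit
    · exact hga
    · exact ih g hgt i hit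

/-! ### The transfinite construction -/

abbrev I : Type := Cardinal.continuum.ord.ToType

instance : Nonempty (X × ℕ) := ⟨(0, 0)⟩

instance : Nontrivial X := by
  refine ⟨⟨⟨fun _ => (1 : ℝ), memℓp_infty ⟨1, ?_⟩⟩, 0, ?_⟩⟩
  · rintro r ⟨n, rfl⟩; simp
  · intro h
    have := congrFun (congrArg Subtype.val h) 0
    simp at this

lemma exists_surj : ∃ φ : I → X × ℕ, Function.Surjective φ := by
  have hX : #X ≤ Cardinal.continuum := by
    have h1 : #X ≤ #(ℕ → ℝ) :=
      Cardinal.mk_le_of_injective (f := fun f : X => (f : ℕ → ℝ)) Subtype.coe_injective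
    have h2 : #(ℕ → ℝ) = Cardinal.continuum := by
      rw [Cardinal.mk_arrow]
      simp [Cardinal.mk_real, Cardinal.continuum_power_aleph0]
    rw [h2] at h1; exact h1
  have h1 : #(X × ℕ) ≤ #I := by
    rw [Cardinal.mk_ord_toType]
    have hprod : #(X × ℕ) = #X * ℵ₀ := by
      rw [Cardinal.mk_prod, Cardinal.lift_id, Cardinal.lift_id, Cardinal.mk_nat]
    rw [hprod]
    calc #X * ℵ₀ ≤ Cardinal.continuum * Cardinal.continuum :=
          mul_le_mul' hX Cardinal.aleph0_le_continuum
      _ = Cardinal.continuum := Cardinal.continuum_mul_self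
  obtain ⟨emb⟩ := Cardinal.le_def _ _ |>.1 h1
  exact ⟨Function.invFun emb, Function.invFun_surjective emb.injective⟩

def φ : I → X × ℕ := exists_surj.choose

lemma φ_surj : Function.Surjective φ := exists_surj.choose_spec

def dd (i : I) : X := (φ i).1

def εε (i : I) : ℝ := 1 / ((φ i).2 + 1)

lemma εε_pos (i : I) : 0 < εε i := by
  unfold εε; positivity

lemma proper (i : I) (rec : ∀ j : I, j < i → X) :
    Submodule.span ℝ (Set.range fun j : {j : I // j < i} => C0.mkQ (rec j j.2)) ≠ ⊤ := by
  apply span_small_ne_top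
  calc #(Set.range fun j : {j : I // j < i} => C0.mkQ (rec j j.2))
      ≤ #{j : I // j < i} := Cardinal.mk_range_le
    _ < Cardinal.continuum := Cardinal.mk_Iio_ord_toType i

def e : I → X :=
  (IsWellFounded.wf (α := I) (r := (· < ·))).fix fun i rec =>
    (step _ (proper i rec) (dd i) (εε_pos i)).choose

lemma e_spec (i : I) :
    ‖e i - dd i‖ < εε i ∧
    C0.mkQ (e i) ∉ Submodule.span ℝ (Set.range fun j : {j : I // j < i} => C0.mkQ (e j)) := by
  have h := (IsWellFounded.wf (α := I) (r := (· < ·))).fix_eq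
    (fun i rec => (step _ (proper i rec) (dd i) (εε_pos i)).choose) i
  have h2 := (step _ (proper i (fun j _ => e j)) (dd i) (εε_pos i)).choose_spec
  rw [show e i = (step _ (proper i (fun j _ => e j)) (dd i) (εε_pos i)).choose from h]
  exact h2

lemma e_indep : LinearIndependent ℝ (fun i => C0.mkQ (e i)) := by
  apply li_of_wo
  intro i
  have h := (e_spec i).2
  rw [Set.image_eq_range]
  exact h

end

end LinftyC0

theorem linfty_setminus_c0_maximal_dense_lineable :
    ∃ E : Submodule ℝ (lp (fun _ : ℕ => ℝ) ⊤),
      Dense (E : Set (lp (fun _ : ℕ => ℝ) ⊤)) ∧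
      Module.rank ℝ E = Cardinal.continuum ∧
      ∀ f ∈ E, f ≠ 0 → ¬ Tendsto (fun n => f n) atTop (𝓝 (0 : ℝ)) := by
  classical
  open LinftyC0 in
  refine ⟨Submodule.span ℝ (Set.range e), ?_, ?_, ?_⟩
  · -- density
    rw [Metric.dense_iff]
    intro x r hr
    obtain ⟨n, hn⟩ := exists_nat_one_div_lt (half_pos hr)
    obtain ⟨i, hi⟩ := φ_surj (x, n)
    refine ⟨e i, ?_, Submodule.subset_span (Set.mem_range_self i)⟩
    rw [Metric.mem_ball, dist_eq_norm]
    have h1 := (e_spec i).1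
    have hd : dd i = x := by rw [dd, hi]
    have hε : εε i = 1 / (n + 1) := by rw [εε, hi]
    rw [hd, hε] at h1
    calc ‖e i - x‖ < 1 / (n + 1) := h1
      _ < r / 2 := hn
      _ < r := by linarith
  · -- rank
    have hinj : Function.Injective e :=
      fun i j h => e_indep.injective (by simp [h])
    rw [rank_span (e_indep.of_comp C0.mkQ)]
    rw [Cardinal.mk_range_eq e hinj]
    exact Cardinal.mk_ord_toType _
  · -- avoids c₀
    intro f hf hne htend
    apply hne
    have hfC : f ∈ C0 := mem_C0.2 htend
    have h0 : C0.mkQ f = 0 := by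
      rw [Submodule.mkQ_apply, Submodule.Quotient.mk_eq_zero]; exact hfC
    rw [Finsupp.mem_span_range_iff_exists_finsupp] at hf
    obtain ⟨c, hc⟩ := hf
    have hlc : Finsupp.linearCombination ℝ (fun i => C0.mkQ (e i)) c = 0 := by
      rw [Finsupp.linearCombination_apply]
      rw [← h0, ← hc]
      rw [map_finsuppSum]
      simp [map_smul]
    have hc0 : c = 0 := e_indep (by rw [hlc, map_zero])
    rw [← hc, hc0]
    simp
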